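/- If V is a finite union of linear subspaces of a finite dimensional vector space and x is a linear automorphism of the vector space such that x · V ⊆ V, then x · V = V. -/

import Mathlib

open Module

/-- A subspace contained in a finite union of subspaces (over ℝ, an infinite field)
is contained in one of them. -/
lemma subspace_le_of_subset_union {H : Type*} [AddCommGroup H] [Module ℝ H]
    (s : Finset (Submodule ℝ H)) (W : Submodule ℝ H)
    (h : (W : Set H) ⊆ ⋃ U ∈ s, (U : Set H)) : ∃ U ∈ s, W ≤ U := by
  have : ∃ U : s, (U.1.comap W.subtype) = ⊤ := by
    apply Subspace.exists_eq_top_of_iUnion_eq_univ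
    ext w
    simp only [Set.mem_iUnion, Set.mem_univ, iff_true]
    have hw := h w.2
    simp only [Set.mem_iUnion] at hw
    obtain ⟨U, hU, hwU⟩ := hw
    exact ⟨⟨U, hU⟩, hwU⟩
  obtain ⟨U, hU⟩ := this
  exact ⟨U.1, U.2, Submodule.comap_subtype_eq_top.mp hU⟩

/-- If `V` is a finite union of linear subspaces and `x` is a linear automorphism
with `x · V ⊆ V`, then `x · V = V`. -/
theorem stmt3 {H : Type*} [AddCommGroup H] [Module ℝ H] [FiniteDimensional ℝ H]
    (V : Set H) (hV : ∃ 𝒳 : Finset (Submodule ℝ H), V = ⋃ U ∈ 𝒳, (U : Set H))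
    (x : H ≃ₗ[ℝ] H) (hx : ⇑x '' V ⊆ V) :
    ⇑x '' V = V := by
  classical
  obtain ⟨𝒳, rfl⟩ := hV
  -- the maximal elements of 𝒳
  set C : Finset (Submodule ℝ H) := 𝒳.filter (fun U => ∀ W ∈ 𝒳, U ≤ W → U = W) with hC
  have hCsub : C ⊆ 𝒳 := Finset.filter_subset _ _
  have hCmax : ∀ U ∈ C, ∀ W ∈ 𝒳, U ≤ W → U = W := by
    intro U hU; exact (Finset.mem_filter.mp hU).2
  -- every element of 𝒳 lies under a maximal one
  have hle : ∀ U ∈ 𝒳, ∃ W ∈ C, U ≤ W := by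
    intro U hU
    obtain ⟨W, hW, hmax⟩ :=
      Set.Finite.exists_maximalFor id {W : Submodule ℝ H | W ∈ 𝒳 ∧ U ≤ W}
        ((𝒳 : Set (Submodule ℝ H)).toFinite.subset (fun W hW => hW.1)) ⟨U, hU, le_refl U⟩
    refine ⟨W, ?_, hW.2⟩
    rw [hC, Finset.mem_filter]
    refine ⟨hW.1, fun W' hW' hWW' => ?_⟩
    exact le_antisymm hWW' (hmax ⟨hW', hW.2.trans hWW'⟩ hWW')
  -- union over C equals union over 𝒳
  have hunion : (⋃ U ∈ C, (U : Set H)) = ⋃ U ∈ 𝒳, (U : Set H) := by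
    apply Set.Subset.antisymm
    · exact Set.iUnion₂_mono' (fun U hU => ⟨U, hCsub hU, le_refl _⟩)
    · refine Set.iUnion₂_subset fun U hU => ?_
      obtain ⟨W, hW, hUW⟩ := hle U hU
      exact Set.subset_iUnion₂_of_subset W hW hUW
  -- the image of a submodule under x, as a set
  have hmapset : ∀ U : Submodule ℝ H, ((U.map (x : H →ₗ[ℝ] H) : Submodule ℝ H) : Set H)
      = ⇑x '' (U : Set H) := fun U => rfl
  have hrank : ∀ U : Submodule ℝ H,
      finrank ℝ (U.map (x : H →ₗ[ℝ] H)) = finrank ℝ U :=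
    fun U => LinearEquiv.finrank_map_eq x U
  -- key: map x sends C into C, by downward induction on dimension
  have key : ∀ m : ℕ, ∀ U ∈ C, finrank ℝ H - finrank ℝ U = m →
      U.map (x : H →ₗ[ℝ] H) ∈ C := by
    intro m
    induction m using Nat.strong_induction_on with
    | _ m ih =>
      intro U hU hm
      -- x(U) ⊆ V, so x(U) ≤ some maximal W
      have hUV : ⇑x '' (U : Set H) ⊆ ⋃ U ∈ 𝒳, (U : Set H) := by
        apply hx.trans' ; apply Set.image_mono
        exact Set.subset_iUnion₂_of_subset U (hCsub hU) (le_refl _)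
      obtain ⟨U', hU', hle'⟩ := subspace_le_of_subset_union 𝒳 (U.map (x : H →ₗ[ℝ] H))
        (by rw [hmapset]; exact hUV)
      obtain ⟨W, hW, hU'W⟩ := hle U' hU'
      have hleW : U.map (x : H →ₗ[ℝ] H) ≤ W := hle'.trans hU'W
      rcases eq_or_lt_of_le (Submodule.finrank_mono hleW) with heq | hlt
      · -- equal dimensions: x(U) = W ∈ C
        have : U.map (x : H →ₗ[ℝ] H) = W :=
          Submodule.eq_of_le_of_finrank_eq hleW heq
        rwa [this]
      · -- strictly bigger dimension: contradiction via surjectivity in higher dims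
        exfalso
        rw [hrank U] at hlt
        have hWH : finrank ℝ W ≤ finrank ℝ H := W.finrank_le
        have hUH : finrank ℝ U < finrank ℝ H := lt_of_lt_of_le hlt hWH
        have hm' : finrank ℝ H - finrank ℝ W < m := by omega
        set C' : Finset (Submodule ℝ H) :=
          C.filter (fun W => finrank ℝ H - finrank ℝ W < m) with hC'
        have hmem : ∀ W' ∈ C', W'.map (x : H →ₗ[ℝ] H) ∈ C' := by
          intro W' hW'
          rw [hC', Finset.mem_filter] at hW' ⊢
          exact ⟨ih _ hW'.2 W' hW'.1 rfl, by rw [hrank]; exact hW'.2⟩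
        have hinj : Set.InjOn (fun W' : Submodule ℝ H => W'.map (x : H →ₗ[ℝ] H)) C' :=
          fun a _ b _ hab => Submodule.map_injective_of_injective x.injective hab
        have himg : C'.image (fun W' => W'.map (x : H →ₗ[ℝ] H)) = C' := by
          apply Finset.eq_of_subset_of_card_le
          · intro W' hW'
            obtain ⟨a, ha, rfl⟩ := Finset.mem_image.mp hW'
            exact hmem a ha
          · rw [Finset.card_image_of_injOn hinj]
        have hWC' : W ∈ C' := by
          rw [hC', Finset.mem_filter]; exact ⟨hW, hm'⟩
        rw [← himg] at hWC'
        obtain ⟨W', hW', hWW'⟩ := Finset.mem_image.mp hWC'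
        -- U ≤ W' with W' ∈ C, so U = W', contradicting dimensions
        have hUleW' : U ≤ W' := by
          have h2 : U.map (x : H →ₗ[ℝ] H) ≤ W'.map (x : H →ₗ[ℝ] H) := by
            rw [hWW']; exact hleW
          exact (Submodule.map_le_map_iff_of_injective x.injective U W').mp h2
        have : U = W' := hCmax U hU W' (hCsub ((Finset.mem_filter.mp hW').1)) hUleW'
        rw [this] at hlt
        rw [← hWW', hrank] at hlt
        exact lt_irrefl _ hlt
  -- now the map W ↦ W.map x permutes C
  have hinjC : Set.InjOn (fun W : Submodule ℝ H => W.map (x : H →ₗ[ℝ] H)) C :=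
    fun a _ b _ hab => Submodule.map_injective_of_injective x.injective hab
  have himgC : C.image (fun W => W.map (x : H →ₗ[ℝ] H)) = C := by
    apply Finset.eq_of_subset_of_card_le
    · intro W' hW'
      obtain ⟨a, ha, rfl⟩ := Finset.mem_image.mp hW'
      exact key _ a ha rfl
    · rw [Finset.card_image_of_injOn hinjC]
  -- conclude
  have hfin : (⋃ U ∈ (C.image (fun W => W.map (x : H →ₗ[ℝ] H)) : Finset (Submodule ℝ H)),
      (U : Set H)) = ⋃ U ∈ C, (U : Set H) := by rw [himgC]
  calc ⇑x '' ⋃ U ∈ 𝒳, (U : Set H) = ⇑x '' ⋃ U ∈ C, (U : Set H) := by rw [hunion]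
    _ = ⋃ U ∈ C, ⇑x '' (U : Set H) := by rw [Set.image_iUnion₂]
    _ = ⋃ U ∈ C, ((U.map (x : H →ₗ[ℝ] H) : Submodule ℝ H) : Set H) := by
        simp only [hmapset]
    _ = ⋃ U ∈ C, (U : Set H) := by
        rw [← hfin]
        ext v
        simp only [Set.mem_iUnion, Finset.mem_image, exists_prop]
        constructor
        · rintro ⟨U, hU, hv⟩
          exact ⟨U.map (x : H →ₗ[ℝ] H), ⟨U, hU, rfl⟩, hv⟩
        · rintro ⟨W, ⟨U, hU, rfl⟩, hv⟩
          exact ⟨U, hU, hv⟩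
    _ = ⋃ U ∈ 𝒳, (U : Set H) := hunion
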